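/- With s_{n,i} as above, the top coefficient satisfies s_{n,n-1} = 2^{n-2} for all n ≥ 2. -/
import Mathlib


/-- With `s n i` the number of simple `n`-braids of length `i` (satisfying `s_{n,0} = 1`,
`s_{n,i} = 0` for `i ≥ n`, and `s_{n,i} = s_{n-1,i} + Σ_{j=1}^{i} s_{n-j,i-j}`), the last
nonzero coefficient is `s_{n,n-1} = 2^{n-2}` for all `n ≥ 2`. -/
theorem simple_braid_top_coefficient (s : ℕ → ℕ → ℚ)
    (h0 : ∀ n, 1 ≤ n → s n 0 = 1)
    (hz : ∀ n i, n ≤ i → s n i = 0)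
    (hrec : ∀ n i, 1 ≤ i → i < n →
      s n i = s (n - 1) i + ∑ j ∈ Finset.Icc 1 i, s (n - j) (i - j)) :
    ∀ n : ℕ, 2 ≤ n → s n (n - 1) = (2 : ℚ) ^ (n - 2) := by
  intro n hn
  induction n, hn using Nat.le_induction with
  | base =>
    have h := hrec 2 1 (by norm_num) (by norm_num)
    simp [hz 1 1 le_rfl, h0 1 le_rfl] at h
    simpa using h
  | succ n hn ih =>
    have h := hrec (n+1) n (by omega) (by omega)
    have hsplit : ∑ j ∈ Finset.Icc 1 n, s (n+1-j) (n-j)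
        = s n (n-1) + ∑ j ∈ Finset.Icc 2 n, s (n+1-j) (n-j) := by
      rw [show Finset.Icc 1 n = insert 1 (Finset.Icc 2 n) by
        ext x; simp only [Finset.mem_Icc, Finset.mem_insert]; omega,
        Finset.sum_insert (by simp)]
      norm_num
    have hshift : ∑ j ∈ Finset.Icc 2 n, s (n+1-j) (n-j)
        = ∑ j ∈ Finset.Icc 1 (n-1), s (n-j) (n-1-j) := by
      rw [show Finset.Icc 2 n = Finset.map (addRightEmbedding 1) (Finset.Icc 1 (n-1)) by
        rw [Finset.map_add_right_Icc]; congr 1 <;> omega, Finset.sum_map]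
      apply Finset.sum_congr rfl
      intro j hj
      simp only [addRightEmbedding_apply]
      congr 1 <;> omega
    have hprev := hrec n (n-1) (by omega) (by omega)
    rw [hz (n-1) (n-1) le_rfl, zero_add] at hprev
    rw [show n + 1 - 1 = n from rfl, hz n n le_rfl, zero_add, hsplit, hshift,
      ← hprev, ih] at h
    simp only [Nat.add_sub_cancel]
    rw [h, show n + 1 - 2 = (n-2) + 1 by omega, pow_succ]
    ring
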